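/- arXiv:1406.6637 — 3 statements merged into one kernel-verified Lean document; each statement's English description precedes it below -/
import Mathlib

section
/- Let f ∈ ℝ[x_1,…,x_N] be an irreducible polynomial which changes sign, i.e. takes both strictly positive and strictly negative values on ℝ^N. Then the ideal of all polynomials vanishing on the real zero set V(f) = {x ∈ ℝ^N : f(x) = 0} is the principal ideal generated by f; that is, every g ∈ ℝ[x_1,…,x_N] vanishing identically on V(f) is divisible by f. -/
/-!  Common definitions: real algebraic sets, semialgebraic and Nash maps, arc spaces and
jet spaces, blowings-up with non-singular centers, blow-Nash maps, arc-analytic maps,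
`AS`-constructible sets, normal crossing presentations of critical loci and the
Jacobian hypothesis. -/

open MvPolynomial Topology Filter

noncomputable section

/-! ### Algebraic sets, vanishing ideals, dimension -/

/-- The common zero set in `ℝ^N` of a set of polynomials. -/
def zeroSet {N : ℕ} (S : Set (MvPolynomial (Fin N) ℝ)) : Set (Fin N → ℝ) :=
  {x | ∀ p ∈ S, eval x p = 0}

/-- A subset of `ℝ^N` is algebraic if it is the zero set of a family of polynomials. -/
def IsAlgebraicSet {N : ℕ} (X : Set (Fin N → ℝ)) : Prop :=
  ∃ S : Set (MvPolynomial (Fin N) ℝ), X = zeroSet S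

/-- The ideal `I(X)` of polynomials vanishing identically on `X ⊆ ℝ^N`. -/
def idealOfSet {N : ℕ} (X : Set (Fin N → ℝ)) : Ideal (MvPolynomial (Fin N) ℝ) where
  carrier := {p | ∀ x ∈ X, eval x p = 0}
  add_mem' := fun ha hb x hx => by simp [map_add, ha x hx, hb x hx]
  zero_mem' := fun x _ => by simp
  smul_mem' := fun c p hp x hx => by simp [smul_eq_mul, hp x hx]

/-- The Zariski closure of a subset of `ℝ^N`. -/
def zariskiClosure {N : ℕ} (S : Set (Fin N → ℝ)) : Set (Fin N → ℝ) :=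
  zeroSet (idealOfSet S : Set (MvPolynomial (Fin N) ℝ))

/-- The dimension of a subset of `ℝ^N`, defined (following Bochnak–Coste–Roy) as the Krull
dimension of its ring of polynomial functions. -/
def setDim {N : ℕ} (X : Set (Fin N → ℝ)) : WithBot ℕ∞ :=
  ringKrullDim (MvPolynomial (Fin N) ℝ ⧸ idealOfSet X)

/-! ### Semialgebraic sets and maps -/

/-- Semialgebraic subsets of `ℝ^n`: the boolean algebra generated by the sets defined by
polynomial sign conditions. -/
inductive IsSemialgebraic : {n : ℕ} → Set (Fin n → ℝ) → Prop
  | pos {n : ℕ} (p : MvPolynomial (Fin n) ℝ) : IsSemialgebraic {x | 0 < eval x p}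
  | zero {n : ℕ} (p : MvPolynomial (Fin n) ℝ) : IsSemialgebraic {x | eval x p = 0}
  | union {n : ℕ} {s t : Set (Fin n → ℝ)} :
      IsSemialgebraic s → IsSemialgebraic t → IsSemialgebraic (s ∪ t)
  | compl {n : ℕ} {s : Set (Fin n → ℝ)} : IsSemialgebraic s → IsSemialgebraic sᶜ

/-- The first `a` coordinates of a point of `ℝ^(a+b)`. -/
def front {a b : ℕ} (z : Fin (a + b) → ℝ) : Fin a → ℝ := fun i => z (Fin.castAdd b i)

/-- The last `b` coordinates of a point of `ℝ^(a+b)`. -/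
def back {a b : ℕ} (z : Fin (a + b) → ℝ) : Fin b → ℝ := fun j => z (Fin.natAdd a j)

/-- The graph of `f` over `X`, as a subset of `ℝ^(a+b)`. -/
def graphSet {a b : ℕ} (X : Set (Fin a → ℝ)) (f : (Fin a → ℝ) → Fin b → ℝ) :
    Set (Fin (a + b) → ℝ) :=
  {z | front z ∈ X ∧ back z = f (front z)}

/-- A map defined on `X ⊆ ℝ^a` with values in `ℝ^b` is semialgebraic if its graph is a
semialgebraic set. -/
def IsSemialgebraicMapOn {a b : ℕ} (f : (Fin a → ℝ) → Fin b → ℝ) (X : Set (Fin a → ℝ)) :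
    Prop :=
  IsSemialgebraic (graphSet X f)

/-- The graph over `D ⊆ ℝ` of an arc `γ : ℝ → ℝ^b`, as a subset of `ℝ^(1+b)`. -/
def arcGraph {b : ℕ} (γ : ℝ → Fin b → ℝ) (D : Set ℝ) : Set (Fin (1 + b) → ℝ) :=
  {z | front z 0 ∈ D ∧ back z = γ (front z 0)}

/-- An arc `γ : D → ℝ^b` is semialgebraic if its graph is a semialgebraic set. -/
def IsSemialgebraicArc {b : ℕ} (γ : ℝ → Fin b → ℝ) (D : Set ℝ) : Prop :=
  IsSemialgebraic (arcGraph γ D)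

/-- `f` is proper as a map from `X` to `Y`: preimages in `X` of compact subsets of `Y`
are compact. -/
def IsProperOn {a b : ℕ} (f : (Fin a → ℝ) → Fin b → ℝ) (X : Set (Fin a → ℝ))
    (Y : Set (Fin b → ℝ)) : Prop :=
  ∀ K ⊆ Y, IsCompact K → IsCompact (X ∩ f ⁻¹' K)

/-! ### Analytic and Nash maps on sets -/

/-- `g` is (real) analytic on the (possibly non-open) set `S`: around each point of `S` it
extends to an analytic map on an open ambient neighborhood. -/
def AnalyticOnSet {a b : ℕ} (g : (Fin a → ℝ) → Fin b → ℝ) (S : Set (Fin a → ℝ)) : Prop :=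
  ∀ x ∈ S, ∃ U : Set (Fin a → ℝ), IsOpen U ∧ x ∈ U ∧
    ∃ G : (Fin a → ℝ) → Fin b → ℝ, AnalyticOnNhd ℝ G U ∧ Set.EqOn G g (U ∩ S)

/-- A Nash map on `S`: semialgebraic and real analytic. -/
def IsNashMapOn {a b : ℕ} (g : (Fin a → ℝ) → Fin b → ℝ) (S : Set (Fin a → ℝ)) : Prop :=
  IsSemialgebraicMapOn g S ∧ AnalyticOnSet g S

/-- `f(t) ≢ 0 mod t^(e+1)`: some Taylor coefficient of `f` at `0` of order `≤ e` is
nonzero. -/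
def notDivTpow (f : ℝ → ℝ) (e : ℕ) : Prop :=
  ∃ m ≤ e, iteratedDeriv m f 0 ≠ 0

/-- The order of vanishing at `0 ∈ ℝ` of a function `f : ℝ → ℝ` (in `ℕ∞`; it is `⊤` when all
the Taylor coefficients at `0` vanish). -/
def ordAt (f : ℝ → ℝ) : ℕ∞ :=
  ⨅ m ∈ {m : ℕ | iteratedDeriv m f 0 ≠ 0}, (m : ℕ∞)

/-- Two germs of curves in `ℝ^q` agree modulo `t^(n+1)`: their Taylor coefficients at `0`
agree up to order `n`. -/
def CongMod {q : ℕ} (f g : ℝ → Fin q → ℝ) (n : ℕ) : Prop :=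
  ∀ j : Fin q, ∀ m ≤ n,
    iteratedDeriv m (fun t => f t j) 0 = iteratedDeriv m (fun t => g t j) 0

/-! ### Non-singular points and local analytic charts -/

/-- `x` is a non-singular point of the algebraic set `X ⊆ ℝ^N` of dimension `d`:
there are `N - d` polynomials vanishing on `X`, with linearly independent gradients at `x`,
which define `X` in a neighborhood of `x` (cf. Bochnak–Coste–Roy, Prop. 3.3.10). -/
def IsNonsingularAt {N : ℕ} (X : Set (Fin N → ℝ)) (d : ℕ) (x : Fin N → ℝ) : Prop :=
  x ∈ X ∧ d ≤ N ∧
  ∃ p : Fin (N - d) → MvPolynomial (Fin N) ℝ,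
    (∀ i, p i ∈ idealOfSet X) ∧
    LinearIndependent ℝ (fun i => (fun j => eval x (pderiv j (p i)) : Fin N → ℝ)) ∧
    ∃ U : Set (Fin N → ℝ), IsOpen U ∧ x ∈ U ∧
      X ∩ U = {y | ∀ i, eval y (p i) = 0} ∩ U

/-- A set is non-singular if each of its points is a non-singular point (in some
dimension). -/
def IsNonsingularSet {N : ℕ} (X : Set (Fin N → ℝ)) : Prop :=
  ∀ x ∈ X, ∃ d, IsNonsingularAt X d x

/-- The singular locus of a `d`-dimensional algebraic set: the complement in `X` of the set
of points that are non-singular of dimension `d`. -/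
def singularLocus {N : ℕ} (X : Set (Fin N → ℝ)) (d : ℕ) : Set (Fin N → ℝ) :=
  {x ∈ X | ¬ IsNonsingularAt X d x}

/-- An analytic local parametrization (chart) of the `d`-dimensional set `M ⊆ ℝ^p`
at `x`. -/
def IsChartAt {p : ℕ} (M : Set (Fin p → ℝ)) (d : ℕ) (ψ : (Fin d → ℝ) → Fin p → ℝ)
    (x : Fin p → ℝ) : Prop :=
  ψ 0 = x ∧
  ∃ (V : Set (Fin d → ℝ)) (W : Set (Fin p → ℝ)),
    IsOpen V ∧ (0 : Fin d → ℝ) ∈ V ∧ IsOpen W ∧ x ∈ W ∧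
    AnalyticOnNhd ℝ ψ V ∧ Set.InjOn ψ V ∧ ψ '' V = M ∩ W ∧
    ∀ y ∈ V, Function.Injective (fderiv ℝ ψ y)

/-- The Jacobian matrix at `y` of a map `g : ℝ^d → ℝ^N`. -/
def jacMat {d N : ℕ} (g : (Fin d → ℝ) → Fin N → ℝ) (y : Fin d → ℝ) :
    Matrix (Fin N) (Fin d) ℝ :=
  Matrix.of fun i j => fderiv ℝ g y (Pi.single j 1) i

/-- The `d`-dimensional volume distortion `√(det (Aᵀ A))` of an `N × d` matrix `A`. -/
def gram {d N : ℕ} (A : Matrix (Fin N) (Fin d) ℝ) : ℝ :=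
  Real.sqrt (A.transpose * A).det

/-- The absolute Jacobian determinant of `f` along `X` is (defined and) `> c` wherever the
differential of `f` along `X` is defined: at every point `x ∈ X`, in every local analytic
chart `ψ` of `X` at `x` in which `f` is analytic, the `d`-volume distortion of
`d(f∘ψ)(0)` is greater than `c` times that of `dψ(0)`. -/
def JacDetGtOn {N : ℕ} (X : Set (Fin N → ℝ)) (f : (Fin N → ℝ) → Fin N → ℝ) (c : ℝ) :
    Prop :=
  ∀ x ∈ X, ∀ (d : ℕ) (ψ : (Fin d → ℝ) → Fin N → ℝ), IsChartAt X d ψ x →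
    AnalyticAt ℝ (fun y => f (ψ y)) 0 →
    c * gram (jacMat ψ 0) < gram (jacMat (fun y => f (ψ y)) 0)

/-! ### Arcs and jets -/

/-- The space of (germs at `0` of) real analytic arcs on `X ⊆ ℝ^N`: analytic maps
`γ : (ℝ,0) → ℝ^N` such that `f(γ(t)) = 0` (as a germ at `0`) for every `f ∈ I(X)`. -/
def arcSpace {N : ℕ} (X : Set (Fin N → ℝ)) : Set (ℝ → Fin N → ℝ) :=
  {γ | AnalyticAt ℝ γ 0 ∧ ∀ p ∈ idealOfSet X, ∀ᶠ t in 𝓝 (0 : ℝ), eval (γ t) p = 0}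

/-- The truncation of an arc to its `n`-jet: the Taylor coefficients at `0` up to order `n`
of each of the `N` coordinates, encoded as a point of `ℝ^((n+1)·N)`. -/
def arcTrunc (n : ℕ) {N : ℕ} (γ : ℝ → Fin N → ℝ) : Fin ((n + 1) * N) → ℝ :=
  fun m =>
    iteratedDeriv ((finProdFinEquiv.symm m).1 : ℕ) (fun t => γ t (finProdFinEquiv.symm m).2) 0
      / (Nat.factorial (finProdFinEquiv.symm m).1)

/-- The polynomial `γ_j(t)` of degree `≤ n` encoded by the `j`-th coordinate of an
`n`-jet. -/
def jetPoly {n N : ℕ} (a : Fin ((n + 1) * N) → ℝ) (j : Fin N) : Polynomial ℝ :=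
  ∑ i : Fin (n + 1), Polynomial.C (a (finProdFinEquiv (i, j))) * Polynomial.X ^ (i : ℕ)

/-- The space of `n`-jets on `X ⊆ ℝ^N`: jets `γ` on `ℝ^N` such that
`f(γ(t)) ≡ 0 mod t^(n+1)` for all `f ∈ I(X)`. -/
def jetSpace (n : ℕ) {N : ℕ} (X : Set (Fin N → ℝ)) : Set (Fin ((n + 1) * N) → ℝ) :=
  {a | ∀ p ∈ idealOfSet X, (Polynomial.X : Polynomial ℝ) ^ (n + 1) ∣ aeval (jetPoly a) p}

/-- Truncation of `m`-jets to `n`-jets (`n ≤ m`). -/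
def jetTrunc {N : ℕ} (m n : ℕ) (h : n ≤ m) (a : Fin ((m + 1) * N) → ℝ) :
    Fin ((n + 1) * N) → ℝ :=
  fun q =>
    a (finProdFinEquiv (Fin.castLE (by omega) (finProdFinEquiv.symm q).1,
        (finProdFinEquiv.symm q).2))

/-- The base point `γ(0)` of a jet. -/
def jetBase {n N : ℕ} (a : Fin ((n + 1) * N) → ℝ) : Fin N → ℝ :=
  fun j => a (finProdFinEquiv (0, j))

/-- The map induced on `n`-jets by a map `σ : ℝ^p → ℝ^N` (meaningful when `σ` is analytic at
the base point of the jet): compose `σ` with the polynomial arc of the jet and truncate. -/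
def jetMap (n : ℕ) {p N : ℕ} (σ : (Fin p → ℝ) → Fin N → ℝ) (a : Fin ((n + 1) * p) → ℝ) :
    Fin ((n + 1) * N) → ℝ :=
  arcTrunc n (fun t => σ (fun i => Polynomial.eval t (jetPoly a i)))

/-- The Zariski tangent space of `X ⊆ ℝ^N` at `x`: the kernel of the gradients at `x` of the
polynomials vanishing on `X`. -/
def zariskiTangent {N : ℕ} (X : Set (Fin N → ℝ)) (x : Fin N → ℝ) : Set (Fin N → ℝ) :=
  {v | ∀ p ∈ idealOfSet X, ∑ j, eval x (pderiv j p) * v j = 0}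

/-- The `(n+1)`-jet with all coefficients `0` except those of `t^(n+1)`, which are given
by `v`. -/
def jetTop {N : ℕ} (n : ℕ) (v : Fin N → ℝ) : Fin ((n + 1 + 1) * N) → ℝ :=
  fun m =>
    if ((finProdFinEquiv.symm m).1 : ℕ) = n + 1 then v (finProdFinEquiv.symm m).2 else 0

/-! ### Blowings-up with non-singular centers, blow-Nash maps -/

/-- The affine "projective coordinates" of the tuple `(g 0 x, …, g (k-1) x)`: the rank-one
projection matrix `g(x)·g(x)ᵀ/|g(x)|²`, flattened; this realizes the point
`[g 0 x : ⋯ : g (k-1) x] ∈ ℙ^(k-1)(ℝ)` inside `ℝ^(k·k)`. -/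
def projCoords {N k : ℕ} (g : Fin k → MvPolynomial (Fin N) ℝ) (x : Fin N → ℝ) :
    Fin (k * k) → ℝ :=
  fun m =>
    eval x (g (finProdFinEquiv.symm m).1) * eval x (g (finProdFinEquiv.symm m).2) /
      ∑ l, (eval x (g l)) ^ 2

/-- `IsBlowingUpSeq M σ X`: `σ : M → X` is a (possibly empty) finite composition of
blowings-up with non-singular centers.  A blowing-up of `M' ⊆ ℝ^(N')` along a non-singular
algebraic center `C ⊆ M'` whose ideal is generated by `g_1, …, g_k` is realized as the
Zariski closure of `{(x, [g(x)]) : x ∈ M' \ C} ⊆ ℝ^(N') × ℙ^(k-1)(ℝ) ⊆ ℝ^(N' + k·k)`,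
with the blowing-down map given by the projection to the first `N'` coordinates. -/
inductive IsBlowingUpSeq : {N' N : ℕ} → Set (Fin N' → ℝ) → ((Fin N' → ℝ) → Fin N → ℝ) →
    Set (Fin N → ℝ) → Prop
  | refl {N : ℕ} (X : Set (Fin N → ℝ)) : IsBlowingUpSeq X id X
  | step {N' N : ℕ} {M : Set (Fin N' → ℝ)} {τ : (Fin N' → ℝ) → Fin N → ℝ}
      {X : Set (Fin N → ℝ)} (k : ℕ) (C : Set (Fin N' → ℝ))
      (g : Fin k → MvPolynomial (Fin N') ℝ) :
      IsBlowingUpSeq M τ X →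
      IsAlgebraicSet C → C ⊆ M → IsNonsingularSet C →
      Ideal.span (Set.range g) = idealOfSet C →
      IsBlowingUpSeq
        (zariskiClosure ((fun x => Fin.append x (projCoords g x)) '' (M \ C)))
        (fun z => τ (front z)) X

/-- `f` is a blow-Nash map from `X ⊆ ℝ^a` to `ℝ^b`: it is semialgebraic and becomes Nash
after composition with some finite sequence of blowings-up with non-singular centers. -/
def IsBlowNash {a b : ℕ} (X : Set (Fin a → ℝ)) (f : (Fin a → ℝ) → Fin b → ℝ) : Prop :=
  IsSemialgebraicMapOn f X ∧
  ∃ (p : ℕ) (M : Set (Fin p → ℝ)) (σ : (Fin p → ℝ) → Fin a → ℝ),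
    IsBlowingUpSeq M σ X ∧ IsNashMapOn (fun z => f (σ z)) M

/-! ### Arc-analytic and generically arc-analytic maps -/

/-- `f : X → ℝ^b` is arc-analytic: it sends real analytic arcs in `X` to real analytic
arcs. -/
def IsArcAnalytic {a b : ℕ} (X : Set (Fin a → ℝ)) (f : (Fin a → ℝ) → Fin b → ℝ) : Prop :=
  ∀ ε : ℝ, 0 < ε → ∀ γ : ℝ → Fin a → ℝ,
    AnalyticOnNhd ℝ γ (Set.Ioo (-ε) ε) → (∀ t ∈ Set.Ioo (-ε) ε, γ t ∈ X) →
    AnalyticOnNhd ℝ (fun t => f (γ t)) (Set.Ioo (-ε) ε)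

/-- `f : X → ℝ^b` is generically arc-analytic in dimension `d = dim X`: there is an algebraic
subset `S ⊆ X` with `dim S < dim X` such that every real analytic arc in `X` not entirely
included in `S` is sent by `f` to a real analytic arc. -/
def IsGenericallyArcAnalytic {a b : ℕ} (d : ℕ) (X : Set (Fin a → ℝ))
    (f : (Fin a → ℝ) → Fin b → ℝ) : Prop :=
  ∃ S : Set (Fin a → ℝ), IsAlgebraicSet S ∧ S ⊆ X ∧ setDim S < ((d : ℕ∞) : WithBot ℕ∞) ∧
    ∀ ε : ℝ, 0 < ε → ∀ γ : ℝ → Fin a → ℝ,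
      AnalyticOnNhd ℝ γ (Set.Ioo (-ε) ε) → (∀ t ∈ Set.Ioo (-ε) ε, γ t ∈ X) →
      ¬ (∀ t ∈ Set.Ioo (-ε) ε, γ t ∈ S) →
      AnalyticOnNhd ℝ (fun t => f (γ t)) (Set.Ioo (-ε) ε)

/-! ### `AS` sets (arc-symmetric constructible sets) -/

/-- The point `[v] ∈ ℙ^n(ℝ)` realized as the projection matrix `v·vᵀ/|v|²` in
`ℝ^((n+1)(n+1))`. -/
def projPoint {n : ℕ} (v : Fin (n + 1) → ℝ) : Fin ((n + 1) * (n + 1)) → ℝ :=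
  fun m => v (finProdFinEquiv.symm m).1 * v (finProdFinEquiv.symm m).2 / ∑ l, v l ^ 2

/-- The real projective space `ℙ^n(ℝ)` realized as an algebraic subset of
`ℝ^((n+1)(n+1))`. -/
def projSpace (n : ℕ) : Set (Fin ((n + 1) * (n + 1)) → ℝ) :=
  {z | ∃ v : Fin (n + 1) → ℝ, v ≠ 0 ∧ z = projPoint v}

/-- The affine chart `ℝ^n → ℙ^n(ℝ)`, `x ↦ [1 : x]`. -/
def affineToProj {n : ℕ} (x : Fin n → ℝ) : Fin ((n + 1) * (n + 1)) → ℝ :=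
  projPoint (Fin.cons 1 x)

/-- `A` is arc-symmetric in `P`: every analytic arc `γ : (-1,1) → P` with `γ((-1,0)) ⊆ A`
stays in `A` for small positive times. -/
def IsArcSymmetricIn {q : ℕ} (P A : Set (Fin q → ℝ)) : Prop :=
  ∀ γ : ℝ → Fin q → ℝ, AnalyticOnNhd ℝ γ (Set.Ioo (-1 : ℝ) 1) →
    (∀ t ∈ Set.Ioo (-1 : ℝ) 1, γ t ∈ P) → (∀ t ∈ Set.Ioo (-1 : ℝ) 0, γ t ∈ A) →
    ∃ ε > 0, ∀ t ∈ Set.Ioo (0 : ℝ) ε, γ t ∈ A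

/-- The boolean algebra of subsets of `ℙ^n(ℝ)` generated by the semialgebraic arc-symmetric
subsets. -/
inductive IsASSubsetOfProj (n : ℕ) : Set (Fin ((n + 1) * (n + 1)) → ℝ) → Prop
  | base {A} : IsSemialgebraic A → A ⊆ projSpace n → IsArcSymmetricIn (projSpace n) A →
      IsASSubsetOfProj n A
  | union {A B} : IsASSubsetOfProj n A → IsASSubsetOfProj n B → IsASSubsetOfProj n (A ∪ B)
  | diff {A B} : IsASSubsetOfProj n A → IsASSubsetOfProj n B → IsASSubsetOfProj n (A \ B)

/-- An `AS`(-constructible) subset of `ℝ^n`: the trace on the affine chart of an element of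
the boolean algebra generated by the semialgebraic arc-symmetric subsets of `ℙ^n(ℝ)`. -/
def IsASSet {n : ℕ} (A : Set (Fin n → ℝ)) : Prop :=
  ∃ B, IsASSubsetOfProj n B ∧ A = affineToProj ⁻¹' B

/-- A map defined on `S ⊆ ℝ^a` with values in `ℝ^b` is an `AS`(-constructible) map if its
graph is an `AS` set. -/
def IsASMapOn {a b : ℕ} (f : (Fin a → ℝ) → Fin b → ℝ) (S : Set (Fin a → ℝ)) : Prop :=
  IsASSet (graphSet S f)

/-! ### The ideal `H` cutting out the singular locus, the sets `L^(e)(X)` -/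

/-- The ideal generated by the `(N-d)`-minors of the Jacobian matrix `(∂f_i/∂x_j)` of a tuple
`f` of `N - d` polynomials in `N` variables. -/
def minorsIdeal {N : ℕ} (d : ℕ) (f : Fin (N - d) → MvPolynomial (Fin N) ℝ) :
    Ideal (MvPolynomial (Fin N) ℝ) :=
  Ideal.span {q | ∃ cols : Fin (N - d) → Fin N,
    q = (Matrix.of fun i k => pderiv (cols k) (f i)).det}

/-- The ideal `H = Σ_{f_1,…,f_(N-d) ∈ I(X)} Δ(f_1,…,f_(N-d))·((f_1,…,f_(N-d)) : I(X))`. -/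
def Hideal {N : ℕ} (d : ℕ) (X : Set (Fin N → ℝ)) : Ideal (MvPolynomial (Fin N) ℝ) :=
  ⨆ f : {f : Fin (N - d) → MvPolynomial (Fin N) ℝ // ∀ i, f i ∈ idealOfSet X},
    minorsIdeal d f.1 * Submodule.colon (Ideal.span (Set.range f.1)) (idealOfSet X)

/-- The set `L^(e)(X)` of arcs on `X` along which some element of `H` does not vanish modulo
`t^(e+1)`. -/
def LeSet {N : ℕ} (d e : ℕ) (X : Set (Fin N → ℝ)) : Set (ℝ → Fin N → ℝ) :=
  {γ ∈ arcSpace X | ∃ g ∈ Hideal d X, notDivTpow (fun t => eval (γ t) g) e}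

/-! ### Order of the Jacobian along arcs, the sets `Δ_(e,e')` -/

/-- `OrdJacEq M d σ γ e`: in a local analytic chart of the `d`-dimensional non-singular set
`M` at `γ(0)`, the minimal order of vanishing at `t = 0` along `γ` of the `d`-minors of the
Jacobian matrix of `σ` equals `e`. -/
def OrdJacEq {p N : ℕ} (M : Set (Fin p → ℝ)) (d : ℕ) (σ : (Fin p → ℝ) → Fin N → ℝ)
    (γ : ℝ → Fin p → ℝ) (e : ℕ∞) : Prop :=
  ∃ (ψ : (Fin d → ℝ) → Fin p → ℝ) (u : ℝ → Fin d → ℝ),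
    IsChartAt M d ψ (γ 0) ∧ AnalyticAt ℝ u 0 ∧ u 0 = 0 ∧
    (∀ᶠ t in 𝓝 (0 : ℝ), ψ (u t) = γ t) ∧
    (⨅ rows : Fin d → Fin N,
        ordAt fun t => ((jacMat (fun y => σ (ψ y)) (u t)).submatrix rows id).det) = e

/-- `σ : M → X` is generically one-to-one: injective away from a subset `S` of `X` with
`dim S < dim X`. -/
def GenericallyOneToOne {p N : ℕ} (M : Set (Fin p → ℝ)) (σ : (Fin p → ℝ) → Fin N → ℝ)
    (X : Set (Fin N → ℝ)) : Prop :=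
  ∃ S : Set (Fin N → ℝ), S ⊆ X ∧ setDim S < setDim X ∧ Set.InjOn σ (M \ σ ⁻¹' S)

/-- The set `Δ_(e,e')` of arcs `γ` on `M` with `ord_t Jac_σ(γ(t)) = e` and
`σ∘γ ∈ L^(e')(X)`; here `d = dim M` and `dX = dim X`. -/
def DeltaSet {p N : ℕ} (M : Set (Fin p → ℝ)) (d : ℕ) (σ : (Fin p → ℝ) → Fin N → ℝ)
    (X : Set (Fin N → ℝ)) (dX e e' : ℕ) : Set (ℝ → Fin p → ℝ) :=
  {γ ∈ arcSpace M | OrdJacEq M d σ γ (e : ℕ∞) ∧ (fun t => σ (γ t)) ∈ LeSet dX e' X}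

/-! ### Normal crossing presentations of critical loci -/

open Classical in
/-- The monomial `∏_(i : x ∈ E i) y(c i)^(ν i)` attached to the divisors through `x`. -/
def ncMonomial {p d : ℕ} {I : Type} [Fintype I] (E : I → Set (Fin p → ℝ)) (ν : I → ℕ)
    (c : I → Fin d) (x : Fin p → ℝ) (y : Fin d → ℝ) : ℝ :=
  ∏ i : I, if x ∈ E i then y (c i) ^ ν i else 1

/-- The critical locus of `σ` on the non-singular `d`-dimensional set `M` is the normal
crossing divisor `∑ ν_i E_i`: in suitable local analytic charts, each `E_i` through the base
point is a coordinate hyperplane and the ideal generated by the `d`-minors of the Jacobian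
matrix of `σ` is generated by the monomial `∏ y(c i)^(ν i)`. -/
def IsNCCrit {p N : ℕ} (M : Set (Fin p → ℝ)) (d : ℕ) (σ : (Fin p → ℝ) → Fin N → ℝ)
    {I : Type} [Fintype I] (E : I → Set (Fin p → ℝ)) (ν : I → ℕ) : Prop :=
  (∀ i, E i ⊆ M) ∧
  ∀ x ∈ M, ∃ ψ : (Fin d → ℝ) → Fin p → ℝ, IsChartAt M d ψ x ∧
    ∃ c : I → Fin d, Set.InjOn c {i | x ∈ E i} ∧
      (∀ i, x ∈ E i → ∀ᶠ y in 𝓝 (0 : Fin d → ℝ), (ψ y ∈ E i ↔ y (c i) = 0)) ∧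
      (∀ i, x ∉ E i → ∀ᶠ y in 𝓝 (0 : Fin d → ℝ), ψ y ∉ E i) ∧
      (∀ rows : Fin d → Fin N, ∃ h : (Fin d → ℝ) → ℝ, AnalyticAt ℝ h 0 ∧
        ∀ᶠ y in 𝓝 (0 : Fin d → ℝ),
          ((jacMat (fun z => σ (ψ z)) y).submatrix rows id).det
            = ncMonomial E ν c x y * h y) ∧
      ∃ a : (Fin d → Fin N) → (Fin d → ℝ) → ℝ, (∀ r, AnalyticAt ℝ (a r) 0) ∧
        ∀ᶠ y in 𝓝 (0 : Fin d → ℝ),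
          ncMonomial E ν c x y
            = ∑ r : Fin d → Fin N,
                a r y * ((jacMat (fun z => σ (ψ z)) y).submatrix r id).det

/-- The pullback `σ^(-1)(H)` of the ideal `H` by `σ` on the non-singular `d`-dimensional set
`M` is the normal crossing divisor `∑ λ_i E_i`: in suitable local analytic charts, each `E_i`
through the base point is a coordinate hyperplane and the ideal generated by the germs
`g∘σ`, `g ∈ H`, is generated by the monomial `∏ y(c i)^(λ i)`. -/
def IsNCPullback {p N : ℕ} (M : Set (Fin p → ℝ)) (d : ℕ) (σ : (Fin p → ℝ) → Fin N → ℝ)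
    (H : Ideal (MvPolynomial (Fin N) ℝ))
    {I : Type} [Fintype I] (E : I → Set (Fin p → ℝ)) (lam : I → ℕ) : Prop :=
  (∀ i, E i ⊆ M) ∧
  ∀ x ∈ M, ∃ ψ : (Fin d → ℝ) → Fin p → ℝ, IsChartAt M d ψ x ∧
    ∃ c : I → Fin d, Set.InjOn c {i | x ∈ E i} ∧
      (∀ i, x ∈ E i → ∀ᶠ y in 𝓝 (0 : Fin d → ℝ), (ψ y ∈ E i ↔ y (c i) = 0)) ∧
      (∀ i, x ∉ E i → ∀ᶠ y in 𝓝 (0 : Fin d → ℝ), ψ y ∉ E i) ∧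
      (∀ g ∈ H, ∃ h : (Fin d → ℝ) → ℝ, AnalyticAt ℝ h 0 ∧
        ∀ᶠ y in 𝓝 (0 : Fin d → ℝ),
          eval (σ (ψ y)) g = ncMonomial E lam c x y * h y) ∧
      ∃ (k : ℕ) (g : Fin k → MvPolynomial (Fin N) ℝ) (a : Fin k → (Fin d → ℝ) → ℝ),
        (∀ l, g l ∈ H) ∧ (∀ l, AnalyticAt ℝ (a l) 0) ∧
        ∀ᶠ y in 𝓝 (0 : Fin d → ℝ),
          ncMonomial E lam c x y = ∑ l, a l y * eval (σ (ψ y)) (g l)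

/-- `ord_γ E = j`: the order of vanishing along the arc `γ` of a local analytic equation of
the divisor `E ⊆ M` at `γ(0)`. -/
def OrdAlongDiv {p : ℕ} (M : Set (Fin p → ℝ)) (E : Set (Fin p → ℝ)) (γ : ℝ → Fin p → ℝ)
    (j : ℕ) : Prop :=
  ∃ (U : Set (Fin p → ℝ)) (f : (Fin p → ℝ) → ℝ), IsOpen U ∧ γ 0 ∈ U ∧
    AnalyticOnNhd ℝ f U ∧ E ∩ U = {x ∈ M ∩ U | f x = 0} ∧
    ordAt (fun t => f (γ t)) = (j : ℕ∞)

/-- The set `B_j` of arcs `γ` on `M` with `ord_γ E_i = j_i` for `i ∈ J = supp j` and origin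
`γ(0) ∈ E_J^∘ = ∩_(i ∈ J) E_i \ ∪_(i ∉ J) E_i`. -/
def Bset {p : ℕ} (M : Set (Fin p → ℝ)) {I : Type} [Fintype I] (E : I → Set (Fin p → ℝ))
    (j : I → ℕ) : Set (ℝ → Fin p → ℝ) :=
  {γ ∈ arcSpace M | (∀ i, j i ≠ 0 → γ 0 ∈ E i ∧ OrdAlongDiv M (E i) γ (j i)) ∧
    ∀ i, j i = 0 → γ 0 ∉ E i}

/-! ### The Jacobian hypothesis -/

/-- `f : X → X` (blow-Nash) satisfies the Jacobian hypothesis: for a sequence of blowings-up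
`σ : M → X` with non-singular centers such that `σ̃ = f∘σ` is Nash and the critical loci of
`σ` and `σ̃` are simultaneously normal crossing divisors `∑ ν_i E_i` and `∑ ν̃_i E_i`, one has
`ν_i ≥ ν̃_i` for all `i` (equivalently, the Jacobian ideal of `σ` is contained in the Jacobian
ideal of `σ̃`). -/
def SatisfiesJacHyp {N : ℕ} (X : Set (Fin N → ℝ))
    (f : (Fin N → ℝ) → Fin N → ℝ) : Prop :=
  ∃ (p d : ℕ) (M : Set (Fin p → ℝ)) (σ : (Fin p → ℝ) → Fin N → ℝ)
    (m : ℕ) (E : Fin m → Set (Fin p → ℝ)) (ν ν' : Fin m → ℕ),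
    IsBlowingUpSeq M σ X ∧ IsNashMapOn (fun z => f (σ z)) M ∧
    IsNCCrit M d σ E ν ∧ IsNCCrit M d (fun z => f (σ z)) E ν' ∧
    ∀ i, ν' i ≤ ν i

end

/-! ### Auxiliary lemmas for Statement 6 -/

section Statement6Aux

open MvPolynomial


lemma analyticOnNhd_mveval {m : ℕ} (p : MvPolynomial (Fin m) ℝ) :
    AnalyticOnNhd ℝ (fun x : Fin m → ℝ => eval x p) Set.univ := by
  induction p using MvPolynomial.induction_on with
  | C a => simpa using analyticOnNhd_const
  | add p q hp hq => simpa [Pi.add_def] using hp.add hq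
  | mul_X p i hp =>
      simpa using hp.mul ((ContinuousLinearMap.proj i :
        (Fin m → ℝ) →L[ℝ] ℝ).analyticOnNhd Set.univ)

lemma continuous_mveval {m : ℕ} (p : MvPolynomial (Fin m) ℝ) :
    Continuous (fun x : Fin m → ℝ => eval x p) := by
  rw [← continuousOn_univ]
  exact (analyticOnNhd_mveval p).continuousOn

lemma mv_eq_zero_of_open {m : ℕ} (p : MvPolynomial (Fin m) ℝ) {U : Set (Fin m → ℝ)}
    (hU : IsOpen U) {x₀ : Fin m → ℝ} (hx₀ : x₀ ∈ U) (hv : ∀ x ∈ U, eval x p = 0) :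
    p = 0 := by
  have h := (analyticOnNhd_mveval p).eqOn_zero_of_preconnected_of_eventuallyEq_zero
    isPreconnected_univ (Set.mem_univ x₀)
    (by filter_upwards [hU.mem_nhds hx₀] with x hx using hv x hx)
  exact MvPolynomial.funext fun x => by simpa using h (Set.mem_univ x)

variable {n : ℕ}

/-- The linear shear `x ↦ x + x 0 • (w - e₀)` on `ℝ^(n+1)`. -/
noncomputable def shearFun (w : Fin (n + 1) → ℝ) (x : Fin (n + 1) → ℝ) : Fin (n + 1) → ℝ :=
  fun j => x j + x 0 * (w j - if j = 0 then 1 else 0)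

/-- The substitution algebra homomorphism corresponding to `shearFun`. -/
noncomputable def shearHom (w : Fin (n + 1) → ℝ) :
    MvPolynomial (Fin (n + 1)) ℝ →ₐ[ℝ] MvPolynomial (Fin (n + 1)) ℝ :=
  aeval (fun j => X j + C (w j - if j = 0 then 1 else 0) * X 0)

/-- Shear parameter of the inverse shear. -/
noncomputable def shearInv (w : Fin (n + 1) → ℝ) : Fin (n + 1) → ℝ :=
  fun j => if j = 0 then 1 / w 0 else - w j / w 0

lemma shearInv_shearInv {w : Fin (n + 1) → ℝ} (hw : w 0 ≠ 0) :
    shearInv (shearInv w) = w := by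
  funext j
  by_cases h : j = 0 <;> simp [shearInv, h] <;> field_simp

lemma shearInv_zero_ne {w : Fin (n + 1) → ℝ} (hw : w 0 ≠ 0) : shearInv w 0 ≠ 0 := by
  simp [shearInv, hw]

lemma shearHom_X (w : Fin (n + 1) → ℝ) (i : Fin (n + 1)) :
    shearHom w (X i) = X i + C (w i - if i = 0 then 1 else 0) * X 0 := by
  simp [shearHom]

lemma eval_shearHom (w : Fin (n + 1) → ℝ) (x : Fin (n + 1) → ℝ)
    (p : MvPolynomial (Fin (n + 1)) ℝ) :
    eval x (shearHom w p) = eval (shearFun w x) p := by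
  induction p using MvPolynomial.induction_on with
  | C a => simp [shearHom]
  | add p q hp hq => simp only [map_add, hp, hq]
  | mul_X p i hp =>
      rw [map_mul, eval_mul, hp, eval_mul, eval_X, shearHom_X]
      congr 1
      simp [shearFun]
      ring

lemma shearFun_zero_apply (w : Fin (n + 1) → ℝ) (x : Fin (n + 1) → ℝ) :
    shearFun w x 0 = x 0 * w 0 := by
  simp [shearFun]
  ring

lemma shearFun_comp {w : Fin (n + 1) → ℝ} (hw : w 0 ≠ 0) (x : Fin (n + 1) → ℝ) :
    shearFun (shearInv w) (shearFun w x) = x := by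
  funext j
  by_cases h : j = 0
  · subst h
    rw [shearFun_zero_apply, shearFun_zero_apply]
    simp only [shearInv, if_pos rfl, ↓reduceIte]
    field_simp
  · simp only [shearFun, shearInv, if_neg h, shearFun_zero_apply, if_pos rfl, ↓reduceIte]
    field_simp
    ring

lemma shearFun_comp' {w : Fin (n + 1) → ℝ} (hw : w 0 ≠ 0) (x : Fin (n + 1) → ℝ) :
    shearFun w (shearFun (shearInv w) x) = x := by
  have h := shearFun_comp (shearInv_zero_ne hw) x
  rwa [shearInv_shearInv hw] at h

lemma shearHom_comp {w : Fin (n + 1) → ℝ} (hw : w 0 ≠ 0)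
    (p : MvPolynomial (Fin (n + 1)) ℝ) :
    shearHom (shearInv w) (shearHom w p) = p := by
  apply MvPolynomial.funext
  intro x
  rw [eval_shearHom, eval_shearHom, shearFun_comp' hw]

lemma shearHom_comp' {w : Fin (n + 1) → ℝ} (hw : w 0 ≠ 0)
    (p : MvPolynomial (Fin (n + 1)) ℝ) :
    shearHom w (shearHom (shearInv w) p) = p := by
  apply MvPolynomial.funext
  intro x
  rw [eval_shearHom, eval_shearHom, shearFun_comp hw]

/-- The shear as an algebra equivalence. -/
noncomputable def shearEquiv (w : Fin (n + 1) → ℝ) (hw : w 0 ≠ 0) :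
    MvPolynomial (Fin (n + 1)) ℝ ≃ₐ[ℝ] MvPolynomial (Fin (n + 1)) ℝ :=
  AlgEquiv.ofAlgHom (shearHom w) (shearHom (shearInv w))
    (AlgHom.ext fun p => shearHom_comp' hw p)
    (AlgHom.ext fun p => shearHom_comp hw p)

lemma shearFun_add (w : Fin (n + 1) → ℝ) (x y : Fin (n + 1) → ℝ) :
    shearFun w (x + y) = shearFun w x + shearFun w y := by
  funext j
  simp [shearFun]
  ring

lemma shearFun_single (w : Fin (n + 1) → ℝ) :
    shearFun w (Pi.single 0 1) = w := by
  funext j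
  by_cases h : j = 0 <;> simp [shearFun, h, Pi.single_apply]

noncomputable section

/-- If `f'` changes sign in the `x 0` direction at `c`, and every real zero of `f'` kills
`d` (a polynomial in the remaining variables), then `d = 0`. -/
lemma small_dim_vanish {n : ℕ} (f' : MvPolynomial (Fin (n + 1)) ℝ)
    (d : MvPolynomial (Fin n) ℝ) (c : Fin (n + 1) → ℝ)
    (h1 : MvPolynomial.eval c f' < 0)
    (h2 : 0 < MvPolynomial.eval (c + Pi.single 0 1) f')
    (hvand : ∀ x : Fin (n + 1) → ℝ,
      MvPolynomial.eval x f' = 0 → MvPolynomial.eval (Fin.tail x) d = 0) :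
    d = 0 := by
  have hcont : Continuous fun x : Fin (n + 1) → ℝ => eval x f' := continuous_mveval f'
  set U : Set (Fin (n + 1) → ℝ) :=
    {x | eval x f' < 0} ∩ {x | 0 < eval (x + Pi.single 0 1) f'} with hU
  have hUopen : IsOpen U :=
    IsOpen.inter (isOpen_lt hcont continuous_const)
      (isOpen_lt continuous_const (hcont.comp (continuous_id.add continuous_const)))
  have hcU : c ∈ U := ⟨h1, h2⟩
  have hWcont : Continuous fun s : Fin n → ℝ => (Fin.cons (c 0) s : Fin (n + 1) → ℝ) := by
    apply continuous_pi
    intro j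
    refine Fin.cases ?_ ?_ j
    · simpa using continuous_const
    · intro i
      simpa using continuous_apply i
  set W : Set (Fin n → ℝ) :=
    (fun s : Fin n → ℝ => (Fin.cons (c 0) s : Fin (n + 1) → ℝ)) ⁻¹' U with hW
  have hWopen : IsOpen W := hUopen.preimage hWcont
  have hcW : Fin.tail c ∈ W := by
    simp only [hW, Set.mem_preimage, Fin.cons_self_tail]
    exact hcU
  have hWzero : ∀ s ∈ W, eval s d = 0 := by
    intro s hs
    rw [hW, Set.mem_preimage, hU, Set.mem_inter_iff, Set.mem_setOf_eq, Set.mem_setOf_eq] at hs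
    obtain ⟨hs1, hs2⟩ := hs
    set x : Fin (n + 1) → ℝ := Fin.cons (c 0) s with hx
    have hadd : Continuous fun t : ℝ => x + t • (Pi.single 0 1 : Fin (n + 1) → ℝ) :=
      continuous_const.add (continuous_id.smul continuous_const)
    have hφ : Continuous fun t : ℝ => eval (x + t • (Pi.single 0 1 : Fin (n + 1) → ℝ)) f' :=
      hcont.comp hadd
    have hIVT := intermediate_value_Icc (le_of_lt one_pos) hφ.continuousOn
    have h0mem : (0 : ℝ) ∈ Set.Icc (eval (x + (0 : ℝ) • (Pi.single 0 1 : Fin (n + 1) → ℝ)) f')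
        (eval (x + (1 : ℝ) • (Pi.single 0 1 : Fin (n + 1) → ℝ)) f') := by
      constructor
      · simpa using le_of_lt hs1
      · simpa using le_of_lt hs2
    obtain ⟨t, _, ht⟩ := hIVT h0mem
    have htail : Fin.tail (x + t • (Pi.single 0 1 : Fin (n + 1) → ℝ)) = s := by
      funext j
      simp [Fin.tail, hx, Pi.single_apply, (Fin.succ_ne_zero j : Fin.succ j ≠ 0)]
    have h5 := hvand _ ht
    rwa [htail] at h5
  exact mv_eq_zero_of_open d hWopen hcW hWzero

end

noncomputable section

/-- Gauss's lemma + Bézout: for `F` irreducible of positive degree over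
`ℝ[x_1,…,x_n]`, either `F ∣ G` or some nonzero "resultant-like" constant `d` lies in the
ideal generated by `F` and `G`. -/
lemma bezout_or_dvd {n : ℕ} (F G : Polynomial (MvPolynomial (Fin n) ℝ))
    (hFirr : Irreducible F) (hdeg : 0 < F.natDegree) :
    F ∣ G ∨ ∃ (P Q : Polynomial (MvPolynomial (Fin n) ℝ)) (d : MvPolynomial (Fin n) ℝ),
      d ≠ 0 ∧ P * F + Q * G = Polynomial.C d := by
  classical
  have hprim : F.IsPrimitive := by
    intro r hr
    obtain ⟨t, ht⟩ := hr
    rcases hFirr.isUnit_or_isUnit ht with h | h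
    · exact Polynomial.isUnit_C.mp h
    · exfalso
      have hle : F.natDegree ≤ 0 := by
        rw [ht]
        refine Polynomial.natDegree_mul_le.trans ?_
        simp [Polynomial.natDegree_eq_zero_of_isUnit h]
      omega
  set A := MvPolynomial (Fin n) ℝ with hA
  letI : NormalizationMonoid A := UniqueFactorizationMonoid.normalizationMonoid.toNormalizationMonoid
  letI : NormalizedGCDMonoid A := UniqueFactorizationMonoid.toNormalizedGCDMonoid A
  set K := FractionRing A with hK
  set F' : Polynomial K := F.map (algebraMap A K) with hF'K
  set G' : Polynomial K := G.map (algebraMap A K) with hG'K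
  by_cases hdvd : F' ∣ G'
  · left
    by_cases hGne0 : G = 0
    · simp [hGne0]
    have hcne : G.content ≠ 0 := by rwa [Ne, Polynomial.content_eq_zero_iff]
    have hu : IsUnit (Polynomial.C (algebraMap A K G.content)) := by
      refine Polynomial.isUnit_C.mpr (isUnit_iff_ne_zero.mpr ?_)
      intro h
      exact hcne (IsFractionRing.injective A K (by simp [h]))
    have hdvd2 : F' ∣ G.primPart.map (algebraMap A K) := by
      have hGdec : G' = Polynomial.C (algebraMap A K G.content)
          * G.primPart.map (algebraMap A K) := by
        conv_lhs => rw [hG'K, G.eq_C_content_mul_primPart]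
        rw [Polynomial.map_mul, Polynomial.map_C]
      rw [hGdec] at hdvd
      exact (hu.dvd_mul_left).mp hdvd
    refine (hprim.dvd_of_fraction_map_dvd_fraction_map
      hdvd2).trans ?_
    exact G.primPart_dvd
  · right
    have hF'irr : Irreducible F' :=
      (hprim.irreducible_iff_irreducible_map_fraction_map (K := K)).mp hFirr
    have hcop : IsCoprime F' G' := (hF'irr.coprime_iff_not_dvd).mpr hdvd
    obtain ⟨α, β, hBez⟩ := hcop
    obtain ⟨⟨cα, hcα0⟩, hcα⟩ :=
      IsLocalization.integerNormalization_map_to_map (nonZeroDivisors A) α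
    obtain ⟨⟨cβ, hcβ0⟩, hcβ⟩ :=
      IsLocalization.integerNormalization_map_to_map (nonZeroDivisors A) β
    rw [Algebra.smul_def, IsScalarTower.algebraMap_apply A K (Polynomial K)] at hcα hcβ
    refine ⟨Polynomial.C cβ * IsLocalization.integerNormalization (nonZeroDivisors A) α,
      Polynomial.C cα * IsLocalization.integerNormalization (nonZeroDivisors A) β,
      cα * cβ, mul_ne_zero (mem_nonZeroDivisors_iff_ne_zero.mp hcα0)
        (mem_nonZeroDivisors_iff_ne_zero.mp hcβ0), ?_⟩
    apply Polynomial.map_injective (algebraMap A K) (IsFractionRing.injective A K)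
    rw [Polynomial.map_add, Polynomial.map_mul, Polynomial.map_mul, Polynomial.map_mul,
      Polynomial.map_mul, Polynomial.map_C, Polynomial.map_C, hcα, hcβ, Polynomial.map_C,
      map_mul, Polynomial.C_mul]
    rw [Polynomial.algebraMap_apply] at hcα hcβ
    simp only [Polynomial.algebraMap_eq]
    linear_combination (Polynomial.C (algebraMap A K cα) * Polynomial.C (algebraMap A K cβ)) * hBez

end

noncomputable section
open Polynomial in
set_option maxHeartbeats 1600000 in
set_option synthInstance.maxHeartbeats 400000 in
theorem key_dvd {n : ℕ} (f : MvPolynomial (Fin (n + 1)) ℝ)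
    (hirr : Irreducible f)
    (hneg : ∃ x : Fin (n + 1) → ℝ, MvPolynomial.eval x f < 0)
    (hpos : ∃ x : Fin (n + 1) → ℝ, 0 < MvPolynomial.eval x f)
    (g : MvPolynomial (Fin (n + 1)) ℝ)
    (hg : ∀ x : Fin (n + 1) → ℝ, MvPolynomial.eval x f = 0 → MvPolynomial.eval x g = 0) :
    f ∣ g := by
  classical
  by_cases hg0 : g = 0
  · exact hg0 ▸ dvd_zero f
  obtain ⟨a, ha⟩ := hneg
  obtain ⟨b, hb⟩ := hpos
  obtain ⟨k, hk⟩ : ∃ k, b k - a k ≠ 0 := by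
    by_contra h
    push_neg at h
    have hab : a = b := funext fun j => by have := h j; linarith
    rw [hab] at ha; linarith
  set sw := Equiv.swap (0 : Fin (n + 1)) k with hsw
  set w : Fin (n + 1) → ℝ := fun j => b (sw j) - a (sw j) with hwdef
  have hw : w 0 ≠ 0 := by simpa [hwdef, hsw, Equiv.swap_apply_left] using hk
  set E := (renameEquiv ℝ sw).trans (shearEquiv w hw) with hE
  have hEapp : ∀ p : MvPolynomial (Fin (n + 1)) ℝ, E p = shearHom w (rename sw p) := by
    intro p; rfl
  have hEval : ∀ (x : Fin (n + 1) → ℝ) (p : MvPolynomial (Fin (n + 1)) ℝ),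
      eval x (E p) = eval (fun j => shearFun w x (sw j)) p := by
    intro x p
    rw [hEapp, eval_shearHom, eval_rename]
    rfl
  set c : Fin (n + 1) → ℝ := shearFun (shearInv w) (fun j => a (sw j)) with hcdef
  have hc : ∀ p, eval c (E p) = eval a p := by
    intro p
    rw [hEval]
    have hx : (fun j => shearFun w c (sw j)) = a := by
      funext j
      have h := congrFun (shearFun_comp' hw (fun j => a (sw j))) (sw j)
      rw [← hcdef] at h
      rw [h, hsw, Equiv.swap_apply_self]
    rw [hx]
  have hc2 : ∀ p, eval (c + Pi.single 0 1) (E p) = eval b p := by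
    intro p
    rw [hEval]
    have hx : (fun j => shearFun w (c + Pi.single 0 1) (sw j)) = b := by
      funext j
      rw [shearFun_add, shearFun_single]
      have h := congrFun (shearFun_comp' hw (fun j => a (sw j))) (sw j)
      rw [← hcdef] at h
      simp only [Pi.add_apply]
      rw [h, hwdef, hsw]
      simp [Equiv.swap_apply_self]
    rw [hx]
  set f' := E f with hf'
  set g' := E g with hg'
  have h1 : eval c f' < 0 := by rw [hf', hc]; exact ha
  have h2 : 0 < eval (c + Pi.single 0 1) f' := by rw [hf', hc2]; exact hb
  have hvan : ∀ x, eval x f' = 0 → eval x g' = 0 := by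
    intro x hx
    rw [hg', hEval]
    rw [hf', hEval] at hx
    exact hg _ hx
  have hf'irr : Irreducible f' := (MulEquiv.irreducible_iff (E : MvPolynomial (Fin (n+1)) ℝ ≃* MvPolynomial (Fin (n+1)) ℝ)).mpr hirr
  -- pass to a polynomial in the variable `x 0`
  set A := MvPolynomial (Fin n) ℝ with hA
  set FE := finSuccEquiv ℝ n with hFE
  set F : Polynomial A := FE f' with hF
  set G : Polynomial A := FE g' with hG
  have hFirr : Irreducible F :=
    (MulEquiv.irreducible_iff (FE : MvPolynomial (Fin (n+1)) ℝ ≃* Polynomial A)).mpr hf'irr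
  have hmveval : ∀ (y : ℝ) (s : Fin n → ℝ) (p : MvPolynomial (Fin (n+1)) ℝ),
      eval (Fin.cons y s) p = Polynomial.eval y ((FE p).map (eval s)) := by
    intro y s p
    rw [eval_eq_eval_mv_eval']
  have hconsadd : ∀ (y : ℝ) (s : Fin n → ℝ),
      (Fin.cons y s : Fin (n+1) → ℝ) + Pi.single 0 1 = Fin.cons (y + 1) s := by
    intro y s
    funext j
    cases j using Fin.cases with
    | zero => simp
    | succ i => simp [Fin.succ_ne_zero i]
  have hdeg : 0 < F.natDegree := by
    rcases Nat.eq_zero_or_pos F.natDegree with h0 | h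
    swap
    · exact h
    exfalso
    obtain ⟨r, hr⟩ := Polynomial.natDegree_eq_zero.mp h0
    have hconst : ∀ (y : ℝ) (s : Fin n → ℝ), eval (Fin.cons y s) f' = eval s r := by
      intro y s
      rw [hmveval, ← hF, ← hr]
      simp
    have e1 : eval c f' = eval (Fin.tail c) r := by
      have := hconst (c 0) (Fin.tail c)
      rwa [Fin.cons_self_tail] at this
    have e2 : eval (c + Pi.single 0 1) f' = eval (Fin.tail c) r := by
      conv_lhs => rw [← Fin.cons_self_tail c]
      rw [hconsadd, hconst]
    linarith
  rcases bezout_or_dvd F G hFirr hdeg with hFG | ⟨P, Q, d, hd0, hEq⟩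
  · -- `F ∣ G`, push back to `f ∣ g`
    have hfg' : f' ∣ g' := by
      have := map_dvd (FE.symm : Polynomial (MvPolynomial (Fin n) ℝ) →ₐ[ℝ]
        MvPolynomial (Fin (n + 1)) ℝ) hFG
      simpa [hF, hG] using this
    have := map_dvd (E.symm : MvPolynomial (Fin (n+1)) ℝ →ₐ[ℝ] MvPolynomial (Fin (n+1)) ℝ) hfg'
    simpa [hf', hg'] using this
  · exfalso
    have hvand : ∀ x : Fin (n + 1) → ℝ, eval x f' = 0 → eval (Fin.tail x) d = 0 := by
      intro x hx
      have hgx : eval x g' = 0 := hvan x hx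
      have hFx : Polynomial.eval (x 0) (Polynomial.map (eval (Fin.tail x)) F) = 0 := by
        have h3 := hmveval (x 0) (Fin.tail x) f'
        rw [Fin.cons_self_tail, hx] at h3
        rw [hF]
        exact h3.symm
      have hGx : Polynomial.eval (x 0) (Polynomial.map (eval (Fin.tail x)) G) = 0 := by
        have h3 := hmveval (x 0) (Fin.tail x) g'
        rw [Fin.cons_self_tail, hgx] at h3
        rw [hG]
        exact h3.symm
      have h4 := congrArg
        (fun P : Polynomial A => Polynomial.eval (x 0) (Polynomial.map (eval (Fin.tail x)) P)) hEq
      simp only [Polynomial.map_add, Polynomial.map_mul, Polynomial.map_C, Polynomial.eval_add,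
        Polynomial.eval_mul, Polynomial.eval_C, hFx, hGx, mul_zero, add_zero, zero_add] at h4
      exact h4.symm
    exact hd0 (small_dim_vanish f' d c h1 h2 hvand)
end

end Statement6Aux

/-! ### STATEMENT 6 -/

/-- If `f ∈ ℝ[x_1,…,x_N]` is an irreducible polynomial taking both strictly positive and
strictly negative values, then `I(V(f)) = (f)`: every polynomial vanishing identically on
the real zero set of `f` is divisible by `f`. -/
theorem idealOf_zeroSet_of_irreducible_sign_change {N : ℕ} (f : MvPolynomial (Fin N) ℝ)
    (hirr : Irreducible f)
    (hneg : ∃ x : Fin N → ℝ, MvPolynomial.eval x f < 0)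
    (hpos : ∃ x : Fin N → ℝ, 0 < MvPolynomial.eval x f) :
    idealOfSet (zeroSet {f}) = Ideal.span {f} ∧
    ∀ g : MvPolynomial (Fin N) ℝ,
      (∀ x : Fin N → ℝ, MvPolynomial.eval x f = 0 → MvPolynomial.eval x g = 0) → f ∣ g := by
  have key : ∀ g : MvPolynomial (Fin N) ℝ,
      (∀ x : Fin N → ℝ, MvPolynomial.eval x f = 0 → MvPolynomial.eval x g = 0) → f ∣ g := by
    intro g hgv
    cases N with
    | zero =>
        exfalso
        have hf0 : f ≠ 0 := hirr.ne_zero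
        set e := MvPolynomial.isEmptyAlgEquiv ℝ (Fin 0) with he
        have h1 : IsUnit (e f) := isUnit_iff_ne_zero.mpr fun h => hf0 (by
          have h2 := congrArg e.symm h
          simpa using h2)
        have h2 := h1.map e.symm.toAlgHom
        simp only [AlgHom.coe_coe, AlgEquiv.coe_algHom] at h2
        rw [AlgEquiv.symm_apply_apply] at h2
        exact hirr.not_isUnit h2
    | succ n =>
        exact key_dvd f hirr hneg hpos g hgv
  refine ⟨?_, key⟩
  ext p
  constructor
  · intro hp
    rw [Ideal.mem_span_singleton]
    refine key p fun x hx => ?_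
    exact hp x (fun q hq => by rw [Set.eq_of_mem_singleton hq]; exact hx)
  · intro hp
    rw [Ideal.mem_span_singleton] at hp
    obtain ⟨q, rfl⟩ := hp
    intro x hxz
    have hfx : MvPolynomial.eval x f = 0 := hxz f (Set.mem_singleton f)
    simp [hfx]
end

section
/- Let X ⊂ ℝ^N be an algebraic subset and γ ∈ L_n(X) an n-jet on X. Then the fiber (π_n^{n+1})^{-1}(γ) of the truncation map π_n^{n+1} : L_{n+1}(X) → L_n(X) over γ is either empty or an affine space isomorphic to the Zariski tangent space of X at the point γ(0). -/
/-!  Common definitions: real algebraic sets, semialgebraic and Nash maps, arc spaces and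
jet spaces, blowings-up with non-singular centers, blow-Nash maps, arc-analytic maps,
`AS`-constructible sets, normal crossing presentations of critical loci and the
Jacobian hypothesis. -/

open MvPolynomial Topology Filter

/-! ### Auxiliary lemmas for Statement 11 -/

private lemma fta_eval_zero_aeval {N : ℕ} (q : Fin N → Polynomial ℝ)
    (p : MvPolynomial (Fin N) ℝ) :
    Polynomial.eval 0 (MvPolynomial.aeval q p)
      = MvPolynomial.eval (fun j => Polynomial.eval 0 (q j)) p := by
  induction p using MvPolynomial.induction_on <;> simp [*]

private lemma fta_taylor_aux {N : ℕ} (n : ℕ) (q : Fin N → Polynomial ℝ) (v : Fin N → ℝ)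
    (p : MvPolynomial (Fin N) ℝ) :
    (Polynomial.X : Polynomial ℝ) ^ (n + 2) ∣
      MvPolynomial.aeval (fun j => q j + Polynomial.C (v j) * Polynomial.X ^ (n + 1)) p
        - MvPolynomial.aeval q p
        - (∑ j, MvPolynomial.aeval q (pderiv j p) * Polynomial.C (v j))
            * Polynomial.X ^ (n + 1) := by
  induction p using MvPolynomial.induction_on with
  | C a => simp
  | add p₁ p₂ h1 h2 =>
      have heq : (MvPolynomial.aeval fun j => q j + Polynomial.C (v j) * Polynomial.X ^ (n + 1)) (p₁ + p₂) - (MvPolynomial.aeval q) (p₁ + p₂) -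
      (∑ j : Fin N, (MvPolynomial.aeval q) ((pderiv j) (p₁ + p₂)) * Polynomial.C (v j)) * Polynomial.X ^ (n + 1)
        = ((MvPolynomial.aeval fun j => q j + Polynomial.C (v j) * Polynomial.X ^ (n + 1)) p₁ - (MvPolynomial.aeval q) p₁ -
      (∑ j : Fin N, (MvPolynomial.aeval q) ((pderiv j) p₁) * Polynomial.C (v j)) * Polynomial.X ^ (n + 1))
        + ((MvPolynomial.aeval fun j => q j + Polynomial.C (v j) * Polynomial.X ^ (n + 1)) p₂ - (MvPolynomial.aeval q) p₂ -
      (∑ j : Fin N, (MvPolynomial.aeval q) ((pderiv j) p₂) * Polynomial.C (v j)) * Polynomial.X ^ (n + 1)) := by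
        simp only [map_add, add_mul, Finset.sum_add_distrib]
        ring
      rw [heq]
      exact dvd_add h1 h2
  | mul_X p i h =>
      have hD : (∑ j, MvPolynomial.aeval q (pderiv j (p * MvPolynomial.X i)) * Polynomial.C (v j))
          = (∑ j, MvPolynomial.aeval q (pderiv j p) * Polynomial.C (v j)) * q i
            + MvPolynomial.aeval q p * Polynomial.C (v i) := by
        rw [Finset.sum_mul]
        rw [show (MvPolynomial.aeval q p * Polynomial.C (v i))
            = ∑ j, if j = i then MvPolynomial.aeval q p * Polynomial.C (v j) else 0 by
          rw [Finset.sum_ite_eq' Finset.univ i (fun j => MvPolynomial.aeval q p * Polynomial.C (v j))]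
          simp]
        rw [← Finset.sum_add_distrib]
        refine Finset.sum_congr rfl fun j _ => ?_
        by_cases hji : j = i
        · subst hji
          simp [pderiv_mul, map_add, map_mul]
          ring
        · simp [pderiv_mul, hji, map_add, map_mul, Pi.single_apply, Ne.symm hji]
          ring
      rw [hD]
      have key : MvPolynomial.aeval (fun j => q j + Polynomial.C (v j) * Polynomial.X ^ (n + 1)) (p * MvPolynomial.X i)
            - MvPolynomial.aeval q (p * MvPolynomial.X i)
            - ((∑ j, MvPolynomial.aeval q (pderiv j p) * Polynomial.C (v j)) * q i
              + MvPolynomial.aeval q p * Polynomial.C (v i)) * Polynomial.X ^ (n + 1)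
          = (MvPolynomial.aeval (fun j => q j + Polynomial.C (v j) * Polynomial.X ^ (n + 1)) p
              - MvPolynomial.aeval q p
              - (∑ j, MvPolynomial.aeval q (pderiv j p) * Polynomial.C (v j)) * Polynomial.X ^ (n + 1))
              * (q i + Polynomial.C (v i) * Polynomial.X ^ (n + 1))
            + ((∑ j, MvPolynomial.aeval q (pderiv j p) * Polynomial.C (v j)) * Polynomial.C (v i))
              * (Polynomial.X ^ (n + 1) * Polynomial.X ^ (n + 1)) := by
        simp [map_mul]
        ring
      rw [key]
      refine dvd_add (Dvd.dvd.mul_right h _) (Dvd.dvd.mul_left ?_ _)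
      rw [← pow_add]
      exact pow_dvd_pow _ (by omega)

private lemma fta_jetPoly_add_top {N n : ℕ} (a₀ : Fin ((n + 1 + 1) * N) → ℝ) (v : Fin N → ℝ)
    (j : Fin N) :
    jetPoly (a₀ + jetTop n v) j = jetPoly a₀ j + Polynomial.C (v j) * Polynomial.X ^ (n + 1) := by
  have h2 : (∑ i : Fin (n + 1 + 1), if i = Fin.last (n + 1) then
        Polynomial.C (v j) * Polynomial.X ^ (i : ℕ) else 0)
      = Polynomial.C (v j) * Polynomial.X ^ (n + 1) := by
    rw [Finset.sum_ite_eq' Finset.univ (Fin.last (n + 1))]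
    simp
  rw [jetPoly, jetPoly, ← h2, ← Finset.sum_add_distrib]
  refine Finset.sum_congr rfl fun i _ => ?_
  by_cases hi : i = Fin.last (n + 1)
  · subst hi
    simp [jetTop, Equiv.symm_apply_apply, map_add, add_mul]
  · have : (i : ℕ) ≠ n + 1 := by
      simpa [Fin.ext_iff] using hi
    simp [jetTop, Equiv.symm_apply_apply, this, hi]

private lemma fta_eval_zero_jetPoly {N n : ℕ} (a : Fin ((n + 1) * N) → ℝ) (j : Fin N) :
    Polynomial.eval 0 (jetPoly a j) = jetBase a j := by
  rw [jetPoly, Polynomial.eval_finset_sum]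
  have h2 : (∑ i : Fin (n + 1), if i = (0 : Fin (n + 1)) then a (finProdFinEquiv (i, j)) else 0)
      = jetBase a j := by
    rw [Finset.sum_ite_eq' Finset.univ (0 : Fin (n + 1))]
    simp [jetBase]
  rw [← h2]
  refine Finset.sum_congr rfl fun i _ => ?_
  by_cases hi : i = 0
  · subst hi; simp
  · have : (i : ℕ) ≠ 0 := by intro h0; exact hi (Fin.ext (by simp [h0]))
    simp [this, hi, zero_pow this]

private lemma fta_c_eq_zero {s : ℝ} {k : ℕ}
    (h : (Polynomial.X : Polynomial ℝ) ^ (k + 1) ∣ Polynomial.C s * Polynomial.X ^ k) :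
    s = 0 := by
  obtain ⟨g, hg⟩ := h
  rw [show Polynomial.X ^ (k + 1) * g = g * Polynomial.X ^ (k + 1) from mul_comm _ _] at hg
  have := congrArg (fun f => Polynomial.coeff f k) hg
  simpa [Polynomial.coeff_mul_X_pow'] using this

private lemma fta_jetTrunc_add_top {N n : ℕ} (a₀ : Fin ((n + 1 + 1) * N) → ℝ)
    (v : Fin N → ℝ) :
    jetTrunc (n + 1) n (Nat.le_succ n) (a₀ + jetTop n v)
      = jetTrunc (n + 1) n (Nat.le_succ n) a₀ := by
  funext q
  have hlt : ((Fin.castLE (by omega : n + 1 ≤ n + 1 + 1) (finProdFinEquiv.symm q).1 :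
      Fin (n + 1 + 1)) : ℕ) ≠ n + 1 := by
    have := (finProdFinEquiv.symm q).1.isLt
    simp only [Fin.coe_castLE]
    omega
  simp only [Pi.add_apply, jetTrunc, jetTop, Equiv.symm_apply_apply]
  rw [if_neg hlt, add_zero]

private lemma fta_jetBase_of_trunc {N n : ℕ} (a₀ : Fin ((n + 1 + 1) * N) → ℝ)
    (γ : Fin ((n + 1) * N) → ℝ)
    (h : jetTrunc (n + 1) n (Nat.le_succ n) a₀ = γ) : jetBase γ = jetBase a₀ := by
  funext j
  rw [← h]
  have h0 : (Fin.castLE (by omega : n + 1 ≤ n + 1 + 1) (0 : Fin (n + 1)) : Fin (n + 1 + 1))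
      = 0 := rfl
  simp only [jetTrunc, jetBase, Equiv.symm_apply_apply, h0]

private lemma fta_eq_add_top {N n : ℕ} (a a₀ : Fin ((n + 1 + 1) * N) → ℝ)
    (h : jetTrunc (n + 1) n (Nat.le_succ n) a = jetTrunc (n + 1) n (Nat.le_succ n) a₀) :
    a = a₀ + jetTop n (fun j => a (finProdFinEquiv (Fin.last (n + 1), j))
      - a₀ (finProdFinEquiv (Fin.last (n + 1), j))) := by
  funext m
  obtain ⟨⟨i, j⟩, rfl⟩ : ∃ x, finProdFinEquiv x = m := ⟨_, Equiv.apply_symm_apply _ m⟩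
  by_cases hi : i = Fin.last (n + 1)
  · subst hi
    simp only [Pi.add_apply, jetTop, Equiv.symm_apply_apply, Fin.val_last]
    simp
  · have hival : (i : ℕ) ≠ n + 1 := by simpa [Fin.ext_iff] using hi
    have hlt : (i : ℕ) < n + 1 := by have := i.isLt; omega
    have hc : Fin.castLE (by omega : n + 1 ≤ n + 1 + 1) (⟨(i : ℕ), hlt⟩ : Fin (n + 1)) = i := by
      simp [Fin.ext_iff]
    have := congrFun h (finProdFinEquiv (⟨(i : ℕ), hlt⟩, j))
    simp only [jetTrunc, Equiv.symm_apply_apply, hc] at this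
    simp only [Pi.add_apply, jetTop, Equiv.symm_apply_apply]
    rw [if_neg hival, add_zero]
    exact this

private lemma fta_key_dvd {N n : ℕ} (a₀ : Fin ((n + 1 + 1) * N) → ℝ) (v : Fin N → ℝ)
    (p : MvPolynomial (Fin N) ℝ) :
    (Polynomial.X : Polynomial ℝ) ^ (n + 1 + 1) ∣
      MvPolynomial.aeval (jetPoly (a₀ + jetTop n v)) p - MvPolynomial.aeval (jetPoly a₀) p
        - Polynomial.C (∑ j, MvPolynomial.eval (jetBase a₀) (pderiv j p) * v j)
            * Polynomial.X ^ (n + 1) := by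
  have h1 := fta_taylor_aux n (jetPoly a₀) v p
  have hfe : (fun j => jetPoly a₀ j + Polynomial.C (v j) * Polynomial.X ^ (n + 1))
      = jetPoly (a₀ + jetTop n v) := funext fun j => (fta_jetPoly_add_top a₀ v j).symm
  rw [hfe] at h1
  have h2 : (Polynomial.X : Polynomial ℝ) ^ (n + 2) ∣
      (∑ j, MvPolynomial.aeval (jetPoly a₀) (pderiv j p) * Polynomial.C (v j))
          * Polynomial.X ^ (n + 1)
        - Polynomial.C (∑ j, MvPolynomial.eval (jetBase a₀) (pderiv j p) * v j)
            * Polynomial.X ^ (n + 1) := by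
    have hC : Polynomial.C (∑ j, MvPolynomial.eval (jetBase a₀) (pderiv j p) * v j)
        = ∑ j, Polynomial.C (MvPolynomial.eval (jetBase a₀) (pderiv j p))
            * Polynomial.C (v j) := by
      rw [map_sum]
      simp [map_mul]
    rw [hC, ← sub_mul, ← Finset.sum_sub_distrib]
    rw [show n + 2 = 1 + (n + 1) by omega, pow_add, pow_one]
    refine mul_dvd_mul (Finset.dvd_sum fun j _ => ?_) dvd_rfl
    rw [← sub_mul]
    refine Dvd.dvd.mul_right ?_ _
    rw [Polynomial.X_dvd_iff, Polynomial.coeff_zero_eq_eval_zero, Polynomial.eval_sub,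
      Polynomial.eval_C, fta_eval_zero_aeval]
    have : (fun j => Polynomial.eval 0 (jetPoly a₀ j)) = jetBase a₀ :=
      funext fun j => fta_eval_zero_jetPoly a₀ j
    rw [this, sub_self]
  rw [← sub_add_sub_cancel _ ((∑ j, MvPolynomial.aeval (jetPoly a₀) (pderiv j p)
      * Polynomial.C (v j)) * Polynomial.X ^ (n + 1)) _]
  exact dvd_add h1 h2

/-! ### STATEMENT 11 -/

/-- For an algebraic subset `X ⊆ ℝ^N` and an `n`-jet `γ ∈ L_n(X)`, the fiber of the
truncation map `π_n^{n+1} : L_{n+1}(X) → L_n(X)` over `γ` is either empty or an affine space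
isomorphic to (a translate of) the Zariski tangent space of `X` at `γ(0)`. -/
theorem fiber_truncation_affine {N : ℕ} (X : Set (Fin N → ℝ)) (hX : IsAlgebraicSet X)
    (n : ℕ) (γ : Fin ((n + 1) * N) → ℝ) (hγ : γ ∈ jetSpace n X) :
    (jetSpace (n + 1) X ∩ jetTrunc (n + 1) n (Nat.le_succ n) ⁻¹' {γ}) = ∅ ∨
    ∃ a₀ ∈ jetSpace (n + 1) X ∩ jetTrunc (n + 1) n (Nat.le_succ n) ⁻¹' {γ},
      jetSpace (n + 1) X ∩ jetTrunc (n + 1) n (Nat.le_succ n) ⁻¹' {γ}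
        = (fun v => a₀ + jetTop n v) '' zariskiTangent X (jetBase γ) := by
  rcases Set.eq_empty_or_nonempty
      (jetSpace (n + 1) X ∩ jetTrunc (n + 1) n (Nat.le_succ n) ⁻¹' {γ}) with h | ⟨a₀, ha₀⟩
  · exact Or.inl h
  right
  refine ⟨a₀, ha₀, ?_⟩
  obtain ⟨ha₀J, ha₀t⟩ := ha₀
  have ha₀t' : jetTrunc (n + 1) n (Nat.le_succ n) a₀ = γ := ha₀t
  have hbase : jetBase γ = jetBase a₀ := fta_jetBase_of_trunc a₀ γ ha₀t'
  ext a
  constructor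
  · rintro ⟨haJ, hat⟩
    have hat' : jetTrunc (n + 1) n (Nat.le_succ n) a = γ := hat
    set v : Fin N → ℝ := fun j => a (finProdFinEquiv (Fin.last (n + 1), j))
      - a₀ (finProdFinEquiv (Fin.last (n + 1), j)) with hv
    have hae : a = a₀ + jetTop n v := fta_eq_add_top a a₀ (by rw [ha₀t', hat'])
    refine ⟨v, ?_, hae.symm⟩
    intro p hp
    have hk := fta_key_dvd a₀ v p
    rw [← hae] at hk
    have hd : (Polynomial.X : Polynomial ℝ) ^ (n + 1 + 1) ∣
        Polynomial.C (∑ j, MvPolynomial.eval (jetBase a₀) (pderiv j p) * v j)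
          * Polynomial.X ^ (n + 1) := by
      have := dvd_sub (dvd_sub (haJ p hp) (ha₀J p hp)) hk
      simpa using this
    rw [hbase]
    exact fta_c_eq_zero hd
  · rintro ⟨v, hv, rfl⟩
    refine ⟨?_, ?_⟩
    · intro p hp
      have hk := fta_key_dvd a₀ v p
      have hz : (∑ j, MvPolynomial.eval (jetBase a₀) (pderiv j p) * v j) = 0 := by
        rw [← hbase]
        exact hv p hp
      rw [hz] at hk
      simp only [map_zero, zero_mul, sub_zero] at hk
      have := dvd_add hk (ha₀J p hp)
      simpa using this
    · simp only [Set.mem_preimage, Set.mem_singleton_iff]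
      rw [fta_jetTrunc_add_top, ha₀t']
end

section
/- Let X be a d-dimensional algebraic subset of ℝ^N and e ∈ ℕ. Then the set L^{(e)}(X) is covered by finitely many sets of the form A_{h,δ} = {γ ∈ L(ℝ^N) : (hδ)(γ(t)) ≢ 0 mod t^{e+1}}, where δ is an (N−d)-minor of the Jacobian matrix (∂f_i/∂x_j) of some f_1,…,f_{N−d} ∈ I(X) and h ∈ ((f_1,…,f_{N−d}) : I(X)). Moreover, for each such A_{h,δ}, one has L(X) ∩ A_{h,δ} = {γ ∈ L(ℝ^N) : f_1(γ) = ⋯ = f_{N−d}(γ) = 0 and (hδ)(γ(t)) ≢ 0 mod t^{e+1}}. -/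
/-!  Common definitions: real algebraic sets, semialgebraic and Nash maps, arc spaces and
jet spaces, blowings-up with non-singular centers, blow-Nash maps, arc-analytic maps,
`AS`-constructible sets, normal crossing presentations of critical loci and the
Jacobian hypothesis. -/

open MvPolynomial Topology Filter

noncomputable section AuxProof

private lemma analyticAt_deriv' {f : ℝ → ℝ} (hf : AnalyticAt ℝ f 0) :
    AnalyticAt ℝ (deriv f) 0 := by
  obtain ⟨s, hs, h⟩ := hf.exists_mem_nhds_analyticOnNhd
  exact h.deriv 0 (mem_of_mem_nhds hs)

private lemma analyticAt_eval_comp' {N : ℕ} {γ : ℝ → Fin N → ℝ} (hγ : AnalyticAt ℝ γ 0)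
    (p : MvPolynomial (Fin N) ℝ) : AnalyticAt ℝ (fun t => eval (γ t) p) 0 := by
  induction p using MvPolynomial.induction_on with
  | C a => simpa using analyticAt_const
  | add p q hp hq => simpa only [map_add] using hp.fun_add hq
  | mul_X p i hp =>
      have hcoord : AnalyticAt ℝ (fun t => γ t i) 0 :=
        ((ContinuousLinearMap.proj i : (Fin N → ℝ) →L[ℝ] ℝ).analyticAt (γ 0)).comp hγ
      simpa only [map_mul, eval_X] using hp.fun_mul hcoord

private lemma iteratedDeriv_zero_fun' (m : ℕ) :
    iteratedDeriv m (fun _ : ℝ => (0 : ℝ)) 0 = 0 := by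
  induction m with
  | zero => simp
  | succ m ih =>
      rw [iteratedDeriv_succ']
      have : deriv (fun _ : ℝ => (0 : ℝ)) = fun _ : ℝ => (0 : ℝ) := by
        funext t; simp
      rw [this]; exact ih

private lemma iteratedDeriv_add_at' {f g : ℝ → ℝ} (hf : AnalyticAt ℝ f 0)
    (hg : AnalyticAt ℝ g 0) (m : ℕ) :
    iteratedDeriv m (fun t => f t + g t) 0 = iteratedDeriv m f 0 + iteratedDeriv m g 0 := by
  induction m generalizing f g with
  | zero => simp
  | succ m ih =>
      have hd : deriv (fun t => f t + g t) =ᶠ[𝓝 (0 : ℝ)] fun t => deriv f t + deriv g t := by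
        filter_upwards [hf.eventually_analyticAt, hg.eventually_analyticAt] with t h1 h2
        exact deriv_add h1.differentiableAt h2.differentiableAt
      rw [iteratedDeriv_succ', hd.iteratedDeriv_eq m, ih (analyticAt_deriv' hf)
        (analyticAt_deriv' hg), iteratedDeriv_succ' (f := f), iteratedDeriv_succ' (f := g)]

private lemma iteratedDeriv_mul_zero' :
    ∀ (m : ℕ) (f g : ℝ → ℝ), AnalyticAt ℝ f 0 → AnalyticAt ℝ g 0 →
      (∀ k ≤ m, iteratedDeriv k g 0 = 0) → iteratedDeriv m (fun t => f t * g t) 0 = 0 := by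
  intro m
  induction m with
  | zero =>
      intro f g _ _ hz
      have h0 := hz 0 le_rfl
      simp only [iteratedDeriv_zero] at h0 ⊢
      simp [h0]
  | succ m ih =>
      intro f g hf hg hz
      have hf' := analyticAt_deriv' hf
      have hg' := analyticAt_deriv' hg
      have hd : deriv (fun t => f t * g t)
          =ᶠ[𝓝 (0 : ℝ)] fun t => deriv f t * g t + f t * deriv g t := by
        filter_upwards [hf.eventually_analyticAt, hg.eventually_analyticAt] with t h1 h2
        exact deriv_fun_mul h1.differentiableAt h2.differentiableAt
      rw [iteratedDeriv_succ', hd.iteratedDeriv_eq m,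
        iteratedDeriv_add_at' (f := fun t => deriv f t * g t) (g := fun t => f t * deriv g t)
          (hf'.mul hg) (hf.mul hg') m,
        ih _ _ hf' hg (fun k hk => hz k (hk.trans (Nat.le_succ m))),
        ih _ _ hf hg' (fun k hk => by
          rw [← iteratedDeriv_succ']; exact hz (k + 1) (by omega)),
        add_zero]

private lemma iteratedDeriv_finsum_zero' {n : ℕ} (m : ℕ) (u : Fin n → ℝ → ℝ)
    (hu : ∀ i, AnalyticAt ℝ (u i) 0) (h0 : ∀ i, iteratedDeriv m (u i) 0 = 0) :
    iteratedDeriv m (fun t => ∑ i, u i t) 0 = 0 := by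
  induction n with
  | zero => simpa using iteratedDeriv_zero_fun' m
  | succ n ih =>
      have heq : (fun t => ∑ i, u i t) = fun t => u 0 t + ∑ i : Fin n, u i.succ t := by
        funext t; rw [Fin.sum_univ_succ]
      rw [heq, iteratedDeriv_add_at' (hu 0)
        (Finset.analyticAt_fun_sum _ fun i _ => hu i.succ) m, h0 0,
        ih _ (fun i => hu i.succ) (fun i => h0 i.succ), add_zero]

private lemma span_le_of_fg' {R M : Type*} [CommRing R] [AddCommGroup M] [Module R M]
    (S : Set M) (hfg : (Submodule.span R S).FG) :
    ∃ T : Set M, T.Finite ∧ T ⊆ S ∧ Submodule.span R S ≤ Submodule.span R T := by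
  obtain ⟨G, hG⟩ := hfg
  have hmem : ∀ g : (G : Set M), ∃ cf : M →₀ R,
      ↑cf.support ⊆ S ∧ (cf.sum fun mi r => r • mi) = (g : M) := by
    rintro ⟨g, hg⟩
    exact Submodule.mem_span_set.mp (hG ▸ Submodule.subset_span hg)
  choose c hsupp hsum using hmem
  haveI : Finite (G : Set M) := G.finite_toSet.to_subtype
  refine ⟨⋃ g : (G : Set M), ↑(c g).support,
    Set.finite_iUnion fun g => (c g).support.finite_toSet,
    Set.iUnion_subset fun g => hsupp g, ?_⟩
  rw [← hG, Submodule.span_le]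
  intro g hg
  have h := hsum ⟨g, hg⟩
  rw [SetLike.mem_coe, show g = ((⟨g, hg⟩ : (G : Set M)) : M) from rfl, ← h, Finsupp.sum]
  refine Submodule.sum_mem _ fun mi hmi => Submodule.smul_mem _ _ (Submodule.subset_span ?_)
  exact Set.mem_iUnion.mpr ⟨⟨g, hg⟩, hmi⟩

end AuxProof

/-! ### STATEMENT 13 -/

/-- **Reduction to complete intersections.**  Let `X ⊆ ℝ^N` be algebraic of dimension `d`
and `e ∈ ℕ`.  Then `L^(e)(X)` is covered by finitely many sets
`A_{h,δ} = {γ ∈ L(ℝ^N) : (hδ)(γ(t)) ≢ 0 mod t^(e+1)}` where `δ` is an `(N-d)`-minor of the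
Jacobian matrix of some `f_1, …, f_{N-d} ∈ I(X)` and `h ∈ ((f_1,…,f_{N-d}) : I(X))`;
moreover for each such `A_{h,δ}`,
`L(X) ∩ A_{h,δ} = {γ ∈ L(ℝ^N) : f_1(γ) = ⋯ = f_{N-d}(γ) = 0, (hδ)(γ(t)) ≢ 0 mod t^(e+1)}`. -/
theorem LeSet_covered_by_complete_intersections {N d : ℕ} (X : Set (Fin N → ℝ))
    (hX : IsAlgebraicSet X) (hdim : setDim X = ((d : ℕ∞) : WithBot ℕ∞)) (e : ℕ) :
    (∃ (k : ℕ) (F : Fin k → (Fin (N - d) → MvPolynomial (Fin N) ℝ))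
       (h : Fin k → MvPolynomial (Fin N) ℝ) (cols : Fin k → (Fin (N - d) → Fin N)),
       (∀ l i, F l i ∈ idealOfSet X) ∧
       (∀ l, h l ∈ Submodule.colon (Ideal.span (Set.range (F l))) (idealOfSet X)) ∧
       LeSet d e X ⊆ ⋃ l : Fin k,
         {γ ∈ arcSpace (Set.univ : Set (Fin N → ℝ)) |
           notDivTpow (fun t => MvPolynomial.eval (γ t)
             (h l * (Matrix.of fun i k' => MvPolynomial.pderiv (cols l k') (F l i)).det)) e}) ∧
    (∀ (F : Fin (N - d) → MvPolynomial (Fin N) ℝ), (∀ i, F i ∈ idealOfSet X) →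
      ∀ h ∈ Submodule.colon (Ideal.span (Set.range F)) (idealOfSet X),
      ∀ cols : Fin (N - d) → Fin N,
        arcSpace X ∩
          {γ ∈ arcSpace (Set.univ : Set (Fin N → ℝ)) |
            notDivTpow (fun t => MvPolynomial.eval (γ t)
              (h * (Matrix.of fun i k' => MvPolynomial.pderiv (cols k') (F i)).det)) e}
        = {γ ∈ arcSpace (Set.univ : Set (Fin N → ℝ)) |
            (∀ i, ∀ᶠ t in nhds (0 : ℝ), MvPolynomial.eval (γ t) (F i) = 0) ∧
            notDivTpow (fun t => MvPolynomial.eval (γ t)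
              (h * (Matrix.of fun i k' => MvPolynomial.pderiv (cols k') (F i)).det)) e}) := by
  
  have arcUniv : ∀ γ : ℝ → Fin N → ℝ, AnalyticAt ℝ γ 0 →
      γ ∈ arcSpace (Set.univ : Set (Fin N → ℝ)) := by
    intro γ hγ
    exact ⟨hγ, fun p hp => Filter.Eventually.of_forall fun τ => hp (γ τ) (Set.mem_univ _)⟩
  constructor
  · -- covering part
    set S : Set (MvPolynomial (Fin N) ℝ) :=
      {q | ∃ (F : Fin (N - d) → MvPolynomial (Fin N) ℝ)
            (h' : MvPolynomial (Fin N) ℝ) (cols : Fin (N - d) → Fin N),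
            (∀ i, F i ∈ idealOfSet X) ∧
            h' ∈ Submodule.colon (Ideal.span (Set.range F)) (idealOfSet X) ∧
            q = h' * (Matrix.of fun i k' => MvPolynomial.pderiv (cols k') (F i)).det} with hSdef
    have hHS : Hideal d X ≤ Ideal.span S := by
      refine iSup_le fun f => ?_
      rw [Ideal.mul_le]
      intro a ha b hb
      induction ha using Submodule.span_induction with
      | mem q hq =>
          obtain ⟨cols, rfl⟩ := hq
          exact Ideal.subset_span ⟨f.1, b, cols, f.2, hb, mul_comm _ _⟩
      | zero => simpa using (Ideal.span S).zero_mem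
      | add x y hx hy px py => simpa [add_mul] using (Ideal.span S).add_mem px py
      | smul r x hx px =>
          rw [smul_eq_mul, mul_assoc]
          exact Ideal.mul_mem_left _ r px
    obtain ⟨T, hTfin, hTS, hspanle⟩ := span_le_of_fg' (R := MvPolynomial (Fin N) ℝ) S (IsNoetherian.noetherian (Ideal.span S))
    obtain ⟨k, temb, hrange⟩ := hTfin.fin_embedding
    have htS : ∀ l, (temb l : MvPolynomial (Fin N) ℝ) ∈ S := fun l =>
      hTS (hrange ▸ Set.mem_range_self l)
    choose F h' cols hF hcolon heq using htS
    refine ⟨k, F, h', cols, fun l => hF l, hcolon, ?_⟩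
    rintro γ ⟨hγX, g, hgH, hnd⟩
    have hana : AnalyticAt ℝ γ 0 := hγX.1
    by_contra hcon
    simp only [Set.mem_iUnion, Set.mem_setOf_eq, not_exists, not_and] at hcon
    have hzero : ∀ l : Fin k, ∀ m ≤ e,
        iteratedDeriv m (fun τ => MvPolynomial.eval (γ τ) (temb l : MvPolynomial (Fin N) ℝ)) 0
          = 0 := by
      intro l m hm
      have := hcon l (arcUniv γ hana)
      rw [notDivTpow] at this
      push_neg at this
      have h2 := this m hm
      rw [← heq l] at h2
      exact h2
    obtain ⟨m, hme, hm0⟩ := hnd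
    apply hm0
    have hgT : g ∈ Ideal.span (Set.range (fun l => (temb l : MvPolynomial (Fin N) ℝ))) := by
      have : Set.range (fun l => (temb l : MvPolynomial (Fin N) ℝ)) = T := hrange
      rw [this]
      exact hspanle (hHS hgH)
    obtain ⟨c, hc⟩ := (Submodule.mem_span_range_iff_exists_fun _).mp hgT
    have hfun : (fun τ => MvPolynomial.eval (γ τ) g)
        = fun τ => ∑ l : Fin k, MvPolynomial.eval (γ τ) (c l) *
            MvPolynomial.eval (γ τ) (temb l : MvPolynomial (Fin N) ℝ) := by
      funext τ
      rw [← hc]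
      simp [smul_eq_mul, map_sum, map_mul]
    rw [hfun]
    refine iteratedDeriv_finsum_zero' m _ (fun l => (analyticAt_eval_comp' hana (c l)).mul
      (analyticAt_eval_comp' hana _)) (fun l => ?_)
    exact iteratedDeriv_mul_zero' m _ _ (analyticAt_eval_comp' hana (c l))
      (analyticAt_eval_comp' hana _) (fun j hj => hzero l j (hj.trans hme))
  · -- intersection part
    intro F hF h hcolon cols
    set δ : MvPolynomial (Fin N) ℝ :=
      (Matrix.of fun i k' => MvPolynomial.pderiv (cols k') (F i)).det with hδdef
    ext γ
    simp only [Set.mem_inter_iff, Set.mem_setOf_eq]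
    constructor
    · rintro ⟨hγX, huniv, hnd⟩
      exact ⟨huniv, fun i => hγX.2 (F i) (hF i), hnd⟩
    · rintro ⟨huniv, hFγ, hnd⟩
      have hana : AnalyticAt ℝ γ 0 := huniv.1
      refine ⟨⟨hana, ?_⟩, huniv, hnd⟩
      intro p hp
      -- h * p lies in the ideal generated by the F i
      have hp' : h * p ∈ Ideal.span (Set.range F) := by
        have := Submodule.mem_colon.mp hcolon p hp
        simpa [smul_eq_mul] using this
      obtain ⟨c, hc⟩ := (Submodule.mem_span_range_iff_exists_fun _).mp hp'
      have hmulz : ∀ᶠ τ in 𝓝 (0 : ℝ),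
          MvPolynomial.eval (γ τ) h * MvPolynomial.eval (γ τ) p = 0 := by
        have hall : ∀ᶠ τ in 𝓝 (0 : ℝ), ∀ i, MvPolynomial.eval (γ τ) (F i) = 0 :=
          eventually_all.mpr hFγ
        filter_upwards [hall] with τ hτ
        have : MvPolynomial.eval (γ τ) (h * p) = 0 := by
          rw [← hc]
          simp [smul_eq_mul, map_sum, map_mul, hτ]
        simpa [map_mul] using this
      have hhne : ¬ ∀ᶠ τ in 𝓝 (0 : ℝ), MvPolynomial.eval (γ τ) h = 0 := by
        intro hcon0
        obtain ⟨m, hme, hm0⟩ := hnd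
        apply hm0
        have hev : (fun τ => MvPolynomial.eval (γ τ) (h * δ)) =ᶠ[𝓝 (0 : ℝ)]
            fun _ => (0 : ℝ) := by
          filter_upwards [hcon0] with τ hτ
          simp [map_mul, hτ]
        rw [hev.iteratedDeriv_eq m, iteratedDeriv_zero_fun' m]
      rcases (analyticAt_eval_comp' hana h).eventually_eq_zero_or_eventually_ne_zero with
        hcase | hcase
      · exact absurd hcase hhne
      · have hpz : ∀ᶠ τ in 𝓝[≠] (0 : ℝ), MvPolynomial.eval (γ τ) p = 0 := by
          filter_upwards [hcase, hmulz.filter_mono nhdsWithin_le_nhds] with τ h1 h2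
          exact (mul_eq_zero.mp h2).resolve_left h1
        have hp0 : MvPolynomial.eval (γ 0) p = 0 := by
          have hcont : ContinuousAt (fun τ => MvPolynomial.eval (γ τ) p) 0 :=
            (analyticAt_eval_comp' hana p).continuousAt
          have h1 : Tendsto (fun τ => MvPolynomial.eval (γ τ) p) (𝓝[≠] (0 : ℝ))
              (𝓝 (MvPolynomial.eval (γ 0) p)) :=
            hcont.continuousWithinAt.tendsto
          have h2 : Tendsto (fun τ => MvPolynomial.eval (γ τ) p) (𝓝[≠] (0 : ℝ)) (𝓝 0) :=
            Tendsto.congr' (EventuallyEq.symm hpz) tendsto_const_nhds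
          exact tendsto_nhds_unique h1 h2
        rw [← nhdsNE_sup_pure (0 : ℝ), eventually_sup]
        exact ⟨hpz, by simpa using hp0⟩
end
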